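/- Let w ∈ ℂ^D be a normalized eigenvector of the inverse discrete Fourier transform F_D^*. Then its Shannon entropy h(w) = -∑_{ε=0}^{D-1} |w_ε|² log |w_ε|² satisfies h(w) ≥ (log D)/2. -/

import Mathlib

open scoped BigOperators Matrix

open Complex Finset

/-- The `D`-dimensional discrete Fourier transform, with entries
`(F_D)_{jk} = D^{-1/2} e^{-2πi jk/D}`. -/
noncomputable def dft (D : ℕ) : Matrix (Fin D) (Fin D) ℂ :=
  fun j k => (1 / Real.sqrt D : ℝ) *
    Complex.exp (-2 * Real.pi * Complex.I * ((j : ℕ) : ℂ) * ((k : ℕ) : ℂ) / (D : ℂ))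

lemma M_apply {D : ℕ} (j k : Fin D) :
    (dft D)ᴴ j k = ((1 / Real.sqrt D : ℝ) : ℂ) *
      Complex.exp (2 * Real.pi * Complex.I * ((k : ℕ) : ℂ) * ((j : ℕ) : ℂ) / (D : ℂ)) := by
  simp only [Matrix.conjTranspose_apply, dft, star_def, map_mul, map_div₀, Complex.conj_ofReal,
    ← Complex.exp_conj, map_neg, Complex.conj_I, map_ofNat, Complex.conj_natCast]
  ring_nf

lemma zeta_pow_D {D : ℕ} (hD : 0 < D) (m : ℤ) :
    Complex.exp (2 * Real.pi * Complex.I * (m : ℂ) / (D : ℂ)) ^ D = 1 := by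
  rw [← Complex.exp_nat_mul]
  have hDne : (D : ℂ) ≠ 0 := Nat.cast_ne_zero.mpr hD.ne'
  have h : (D : ℂ) * (2 * Real.pi * Complex.I * (m : ℂ) / (D : ℂ)) =
      (m : ℂ) * (2 * Real.pi * Complex.I) := by field_simp
  rw [h, Complex.exp_int_mul_two_pi_mul_I]

lemma zeta_ne_one {D : ℕ} (hD : 0 < D) (m : ℤ) (hm : m ≠ 0) (hmD : |m| < D) :
    Complex.exp (2 * Real.pi * Complex.I * (m : ℂ) / (D : ℂ)) ≠ 1 := by
  intro h
  rw [Complex.exp_eq_one_iff] at h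
  obtain ⟨n, hn⟩ := h
  have hDne : (D : ℂ) ≠ 0 := Nat.cast_ne_zero.mpr hD.ne'
  have hI : (2 * (Real.pi : ℂ) * Complex.I) ≠ 0 := by
    simp [Real.pi_ne_zero, Complex.I_ne_zero]
  have h1 : 2*(Real.pi:ℂ)*Complex.I*(m:ℂ) = 2*(Real.pi:ℂ)*Complex.I*((n:ℂ)*(D:ℂ)) := by
    field_simp at hn
    linear_combination (2 * (Real.pi:ℂ) * Complex.I) * hn
  have h2 : (m:ℂ) = (n:ℂ)*(D:ℂ) := mul_left_cancel₀ hI h1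
  have h3 : m = n * D := by exact_mod_cast h2
  rcases eq_or_ne n 0 with rfl | hn0
  · simp at h3; exact hm h3
  · have : (D:ℤ) ≤ |m| := by
      rw [h3, abs_mul, Int.abs_natCast]
      nlinarith [Int.one_le_abs hn0]
    omega

lemma orth {D : ℕ} (hD : 0 < D) (k l : Fin D) :
    ∑ j : Fin D, (dft D)ᴴ j k * (starRingEnd ℂ) ((dft D)ᴴ j l)
      = if k = l then 1 else 0 := by
  have hDne : (D : ℂ) ≠ 0 := Nat.cast_ne_zero.mpr hD.ne'
  have hsqrt : ((Real.sqrt D : ℝ) : ℂ) * ((Real.sqrt D : ℝ) : ℂ) = (D : ℂ) := by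
    rw [← Complex.ofReal_mul, Real.mul_self_sqrt (Nat.cast_nonneg D)]; simp
  have hsq : ((1 / Real.sqrt D : ℝ) : ℂ) * ((1 / Real.sqrt D : ℝ) : ℂ) = 1 / (D : ℂ) := by
    rw [Complex.ofReal_div, Complex.ofReal_one, div_mul_div_comm, one_mul, hsqrt]
  set m : ℤ := (k : ℤ) - (l : ℤ) with hm
  have key : ∀ j : Fin D, (dft D)ᴴ j k * (starRingEnd ℂ) ((dft D)ᴴ j l)
      = (1 / (D:ℂ)) * Complex.exp (2 * Real.pi * Complex.I * (m : ℂ) / (D : ℂ)) ^ (j:ℕ) := by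
    intro j
    have e1 : (starRingEnd ℂ) (2 * (Real.pi:ℂ) * Complex.I * ((l:ℕ):ℂ) * ((j:ℕ):ℂ) / (D:ℂ))
        = -(2 * (Real.pi:ℂ) * Complex.I * ((l:ℕ):ℂ) * ((j:ℕ):ℂ) / (D:ℂ)) := by
      simp only [map_div₀, map_mul, Complex.conj_I, Complex.conj_natCast, map_ofNat,
        Complex.conj_ofReal]
      push_cast
      ring
    rw [M_apply, M_apply, map_mul, Complex.conj_ofReal, ← Complex.exp_conj, e1]
    rw [mul_mul_mul_comm, hsq, ← Complex.exp_add, ← Complex.exp_nat_mul]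
    congr 1
    push_cast [hm]
    field_simp
    ring
  rw [Finset.sum_congr rfl (fun j _ => key j), ← Finset.mul_sum]
  rw [Fin.sum_univ_eq_sum_range (fun i => Complex.exp (2 * Real.pi * Complex.I * (m : ℂ) / (D : ℂ)) ^ i)]
  rcases eq_or_ne k l with rfl | hkl
  · simp only [hm, sub_self, Int.cast_zero, mul_zero, zero_div, Complex.exp_zero, one_pow,
      Finset.sum_const, Finset.card_range, nsmul_eq_mul, mul_one, if_pos rfl, ↓reduceIte]
    field_simp
  · have hkln : (k:ℕ) ≠ (l:ℕ) := fun h => hkl (Fin.ext h)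
    have hmne : m ≠ 0 := by simp only [hm]; omega
    have hmD : |m| < D := by
      rw [hm]
      have := k.isLt; have := l.isLt
      rw [abs_sub_lt_iff]; omega
    rw [geom_sum_eq (zeta_ne_one hD m hmne hmD), zeta_pow_D hD m]
    simp [hkl]

lemma parseval {D : ℕ} (hD : 0 < D) (v : Fin D → ℂ) :
    ∑ j, ‖(dft D)ᴴ.mulVec v j‖^2 = ∑ k, ‖v k‖^2 := by
  have key : ∑ j, ((dft D)ᴴ.mulVec v j) * (starRingEnd ℂ) ((dft D)ᴴ.mulVec v j)
      = ∑ k, v k * (starRingEnd ℂ) (v k) := by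
    simp only [Matrix.mulVec, dotProduct]
    calc ∑ j, (∑ k, (dft D)ᴴ j k * v k) * (starRingEnd ℂ) (∑ l, (dft D)ᴴ j l * v l)
        = ∑ j : Fin D, ∑ k : Fin D, ∑ l : Fin D,
            (v k * (starRingEnd ℂ) (v l)) * ((dft D)ᴴ j k * (starRingEnd ℂ) ((dft D)ᴴ j l)) := by
          refine Finset.sum_congr rfl fun j _ => ?_
          rw [map_sum, Finset.sum_mul_sum]
          refine Finset.sum_congr rfl fun k _ => Finset.sum_congr rfl fun l _ => ?_
          rw [map_mul]; ring
      _ = ∑ k : Fin D, ∑ l : Fin D,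
            (v k * (starRingEnd ℂ) (v l)) * ∑ j, ((dft D)ᴴ j k * (starRingEnd ℂ) ((dft D)ᴴ j l)) := by
          rw [Finset.sum_comm]
          refine Finset.sum_congr rfl fun k _ => ?_
          rw [Finset.sum_comm]
          refine Finset.sum_congr rfl fun l _ => ?_
          rw [Finset.mul_sum]
      _ = ∑ k : Fin D, ∑ l : Fin D, (v k * (starRingEnd ℂ) (v l)) * (if k = l then 1 else 0) := by
          simp_rw [orth hD]
      _ = ∑ k, v k * (starRingEnd ℂ) (v k) := by
          simp [Finset.sum_ite_eq]
  have := congrArg Complex.re key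
  simpa [Complex.mul_conj, Complex.normSq_eq_norm_sq, ← Complex.ofReal_pow] using this
open scoped BigOperators Matrix
open Complex Finset

-- Cauchy-Schwarz for complex sums
lemma cs_complex {D : ℕ} (a b : Fin D → ℂ) :
    ‖∑ j, a j * b j‖ ≤ Real.sqrt (∑ j, ‖a j‖^2) * Real.sqrt (∑ j, ‖b j‖^2) := by
  calc ‖∑ j, a j * b j‖ ≤ ∑ j, ‖a j * b j‖ := norm_sum_le _ _
    _ = ∑ j, ‖a j‖ * ‖b j‖ := by simp [norm_mul]
    _ ≤ _ := Real.sum_mul_le_sqrt_mul_sqrt _ _ _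

noncomputable def fz (r : ℝ) (u : ℂ) (z : ℂ) : ℂ :=
  if u = 0 then 0 else (u / ‖u‖) * Complex.exp ((((r/2 : ℝ)) * (1+z)) * (Real.log ‖u‖ : ℂ))

lemma fz_abs (r : ℝ) (hr : 0 < r) (u : ℂ) (z : ℂ) (hz : 0 ≤ z.re) :
    ‖fz r u z‖ = ‖u‖ ^ ((r/2) * (1 + z.re)) := by
  rcases eq_or_ne u 0 with rfl | hu
  · rw [fz, if_pos rfl]
    rw [norm_zero, Real.zero_rpow (by positivity)]
  · rw [fz, if_neg hu, norm_mul, norm_div, Complex.norm_real, norm_norm,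
      div_self (norm_ne_zero_iff.mpr hu), one_mul, Complex.norm_exp]
    have hre : ((((r/2 : ℝ)):ℂ) * (1+z) * (Real.log ‖u‖ : ℂ)).re
        = (Real.log ‖u‖) * ((r/2) * (1 + z.re)) := by
      simp [Complex.mul_re, Complex.ofReal_re, Complex.ofReal_im, Complex.add_re, Complex.add_im]
      ring
    rw [hre, Real.rpow_def_of_pos (norm_pos_iff.mpr hu)]

lemma fz_at_t (r : ℝ) (t : ℝ) (hrt : r/2 * (1+t) = 1) (u : ℂ) :
    fz r u t = u := by
  rcases eq_or_ne u 0 with rfl | hu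
  · rw [fz, if_pos rfl]
  · rw [fz, if_neg hu]
    have : (((r/2 : ℝ)):ℂ) * (1+(t:ℂ)) * (Real.log ‖u‖ : ℂ) = ((Real.log ‖u‖ : ℝ) : ℂ) := by
      push_cast
      rw [show ((r:ℂ)/2) * (1+(t:ℂ)) = ((r/2*(1+t) : ℝ) : ℂ) by push_cast; ring, hrt]
      push_cast; ring
    rw [this, ← Complex.ofReal_exp, Real.exp_log (norm_pos_iff.mpr hu)]
    rw [div_mul_cancel₀]
    simpa using norm_ne_zero_iff.mpr hu

lemma fz_differentiable (r : ℝ) (u : ℂ) : Differentiable ℂ (fz r u) := by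
  rcases eq_or_ne u 0 with rfl | hu
  · have : fz r 0 = fun _ => 0 := by funext z; rw [fz, if_pos rfl]
    rw [this]; exact differentiable_const 0
  · have : fz r u = fun z => (u / ‖u‖) * Complex.exp ((((r/2 : ℝ)):ℂ) * (1+z) * (Real.log ‖u‖ : ℂ)) := by
      funext z; rw [fz, if_neg hu]
    rw [this]
    apply Differentiable.const_mul
    apply Differentiable.cexp
    apply Differentiable.mul_const
    apply Differentiable.const_mul
    exact (differentiable_const _).add differentiable_id

lemma M_norm {D : ℕ} (j k : Fin D) : ‖(dft D)ᴴ j k‖ = 1 / Real.sqrt D := by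
  rw [M_apply, norm_mul, Complex.norm_real]
  have h : (2 * (Real.pi:ℂ) * Complex.I * ((k:ℕ):ℂ) * ((j:ℕ):ℂ) / (D:ℂ))
      = ((2 * Real.pi * (k:ℕ) * (j:ℕ) / (D:ℕ) : ℝ) : ℂ) * Complex.I := by
    push_cast; ring
  rw [h, Complex.norm_exp_ofReal_mul_I, mul_one, Real.norm_eq_abs, _root_.abs_of_nonneg (by positivity)]

section
variable {D : ℕ}

lemma RT_bilinear (hD : 0 < D) {t : ℝ} (ht0 : 0 < t) (ht1 : t < 1)
    (v x : Fin D → ℂ)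
    (hv : ∑ k, ‖v k‖ ^ (2/(1+t)) = 1) (hx : ∑ j, ‖x j‖ ^ (2/(1+t)) = 1) :
    ‖∑ j, x j * (dft D)ᴴ.mulVec v j‖ ≤ (D:ℝ) ^ (-t/2) := by
  have ht0' : (0:ℝ) < 1 + t := by linarith
  set r : ℝ := 2/(1+t) with hr_def
  have hr : 0 < r := by positivity
  have hrt : r/2 * (1+t) = 1 := by rw [hr_def]; field_simp [ht0'.ne']
  have hDpos : (0:ℝ) < (D:ℝ) := by exact_mod_cast hD
  have hsqrtD : (0:ℝ) < Real.sqrt D := Real.sqrt_pos.mpr hDpos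
  set Φ : ℂ → ℂ := fun z => ∑ j, fz r (x j) z * ((dft D)ᴴ.mulVec (fun k => fz r (v k) z)) j
    with hΦ_def
  have hΦdiff : Differentiable ℂ Φ := by
    apply Differentiable.fun_sum
    intro j _
    apply Differentiable.mul (fz_differentiable r (x j))
    simp only [Matrix.mulVec, dotProduct]
    apply Differentiable.fun_sum
    intro k _
    exact (fz_differentiable r (v k)).const_mul _
  -- generic ℓ¹ bound
  have hl1 : ∀ z : ℂ, ∀ A C : Fin D → ℝ, (∀ j, ‖fz r (x j) z‖ ≤ A j) →
      (∀ k, ‖fz r (v k) z‖ ≤ C k) → (∀ k, 0 ≤ C k) →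
      ‖Φ z‖ ≤ (∑ j, A j) * ((1/Real.sqrt D) * ∑ k, C k) := by
    intro z A C hA hC hC0
    have hrow : ∀ j, ‖((dft D)ᴴ.mulVec (fun k => fz r (v k) z)) j‖
        ≤ (1/Real.sqrt D) * ∑ k, C k := by
      intro j
      simp only [Matrix.mulVec, dotProduct]
      calc ‖∑ k, (dft D)ᴴ j k * fz r (v k) z‖ ≤ ∑ k, ‖(dft D)ᴴ j k * fz r (v k) z‖ :=
            norm_sum_le _ _
        _ = ∑ k, (1/Real.sqrt D) * ‖fz r (v k) z‖ := by
            refine Finset.sum_congr rfl fun k _ => ?_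
            rw [norm_mul, M_norm]
        _ ≤ ∑ k, (1/Real.sqrt D) * C k :=
            Finset.sum_le_sum fun k _ =>
              mul_le_mul_of_nonneg_left (hC k) (by positivity)
        _ = (1/Real.sqrt D) * ∑ k, C k := by rw [Finset.mul_sum]
    calc ‖Φ z‖ ≤ ∑ j, ‖fz r (x j) z * ((dft D)ᴴ.mulVec (fun k => fz r (v k) z)) j‖ :=
          norm_sum_le _ _
      _ ≤ ∑ j, A j * ((1/Real.sqrt D) * ∑ k, C k) := by
          refine Finset.sum_le_sum fun j _ => ?_
          rw [norm_mul]
          exact mul_le_mul (hA j) (hrow j) (norm_nonneg _)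
            ((norm_nonneg _).trans (hA j))
      _ = (∑ j, A j) * ((1/Real.sqrt D) * ∑ k, C k) := by rw [← Finset.sum_mul]
  -- boundary at re = 0
  have habs_sq : ∀ (u : Fin D → ℂ) (z : ℂ), 0 ≤ z.re →
      (∑ i, (‖fz r (u i) z‖)^2) = ∑ i, ‖u i‖ ^ (r * (1 + z.re)) := by
    intro u z hz
    refine Finset.sum_congr rfl fun i _ => ?_
    rw [fz_abs r hr _ z hz, ← Real.rpow_natCast (‖u i‖ ^ (r / 2 * (1 + z.re))) 2,
      ← Real.rpow_mul (norm_nonneg _)]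
    norm_num
    ring_nf
  have hbound0 : ∀ z : ℂ, z.re = 0 → ‖Φ z‖ ≤ 1 := by
    intro z hz
    have hz' : (0:ℝ) ≤ z.re := le_of_eq hz.symm
    have h1 : (∑ j, (‖fz r (x j) z‖)^2) = 1 := by
      rw [habs_sq x z hz', hz]
      simpa using hx
    have h2 : (∑ j, ‖((dft D)ᴴ.mulVec (fun k => fz r (v k) z)) j‖^2) = 1 := by
      rw [parseval hD, habs_sq v z hz', hz]
      simpa using hv
    calc ‖Φ z‖ ≤ Real.sqrt (∑ j, (‖fz r (x j) z‖)^2) *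
          Real.sqrt (∑ j, ‖((dft D)ᴴ.mulVec (fun k => fz r (v k) z)) j‖^2) := cs_complex _ _
      _ = 1 := by rw [h1, h2]; simp
  -- boundary at re = 1
  have hbound1 : ∀ z : ℂ, z.re = 1 → ‖Φ z‖ ≤ 1/Real.sqrt D := by
    intro z hz
    have hz' : (0:ℝ) ≤ z.re := by rw [hz]; norm_num
    have he : r/2 * (1 + z.re) = r := by rw [hz]; ring
    have := hl1 z (fun j => ‖x j‖ ^ r) (fun k => ‖v k‖ ^ r)
      (fun j => by rw [fz_abs r hr _ z hz', he]) (fun k => by rw [fz_abs r hr _ z hz', he])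
      (fun k => Real.rpow_nonneg (norm_nonneg _) r)
    rw [hx, hv] at this
    simpa using this
  -- bounded on the strip
  have hBdd : BddAbove ((norm ∘ Φ) '' (Complex.HadamardThreeLines.verticalClosedStrip 0 1)) := by
    set A : Fin D → ℝ := fun j => ‖x j‖ ^ (r/2) + ‖x j‖ ^ r with hA_def
    set C : Fin D → ℝ := fun k => ‖v k‖ ^ (r/2) + ‖v k‖ ^ r with hC_def
    have key : ∀ (u : ℂ) (z : ℂ), 0 ≤ z.re → z.re ≤ 1 →
        ‖fz r u z‖ ≤ ‖u‖ ^ (r/2) + ‖u‖ ^ r := by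
      intro u z hz0 hz1
      rw [fz_abs r hr u z hz0]
      rcases eq_or_ne u 0 with rfl | hu
      · rw [norm_zero, Real.zero_rpow (by positivity)]
        positivity
      · have hpos : 0 < ‖u‖ := norm_pos_iff.mpr hu
        rcases le_or_gt ‖u‖ 1 with h1 | h1
        · have : ‖u‖ ^ (r/2 * (1+z.re)) ≤ ‖u‖ ^ (r/2) :=
            Real.rpow_le_rpow_of_exponent_ge hpos h1 (by nlinarith)
          have h2 : (0:ℝ) ≤ ‖u‖ ^ r := Real.rpow_nonneg (norm_nonneg _) r
          linarith
        · have : ‖u‖ ^ (r/2 * (1+z.re)) ≤ ‖u‖ ^ r :=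
            Real.rpow_le_rpow_of_exponent_le (le_of_lt h1) (by nlinarith)
          have h2 : (0:ℝ) ≤ ‖u‖ ^ (r/2) := Real.rpow_nonneg (norm_nonneg _) _
          linarith
    refine ⟨(∑ j, A j) * ((1/Real.sqrt D) * ∑ k, C k), ?_⟩
    rintro y ⟨z, hz, rfl⟩
    simp only [Function.comp_apply]
    exact hl1 z A C (fun j => key (x j) z hz.1 hz.2) (fun k => key (v k) z hz.1 hz.2)
      (fun k => by positivity)
  -- apply Hadamard three lines
  have hmem : (t : ℂ) ∈ Complex.HadamardThreeLines.verticalClosedStrip 0 1 := by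
    simp only [Complex.HadamardThreeLines.verticalClosedStrip, Set.mem_preimage,
      Complex.ofReal_re, Set.mem_Icc]
    exact ⟨le_of_lt ht0, le_of_lt ht1⟩
  have h3l := Complex.HadamardThreeLines.norm_le_interp_of_mem_verticalClosedStrip₀₁' Φ hmem
    hΦdiff.diffContOnCl hBdd (fun z hz => hbound0 z hz) (fun z hz => hbound1 z hz)
  rw [Complex.ofReal_re] at h3l
  have hΦt : Φ (t : ℂ) = ∑ j, x j * (dft D)ᴴ.mulVec v j := by
    rw [hΦ_def]
    refine Finset.sum_congr rfl fun j _ => ?_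
    rw [fz_at_t r t hrt]
    congr 2
    funext k
    rw [fz_at_t r t hrt]
  rw [hΦt] at h3l
  calc ‖∑ j, x j * (dft D)ᴴ.mulVec v j‖ ≤ 1 ^ (1 - t) * (1/Real.sqrt D) ^ t := h3l
    _ = (D:ℝ) ^ (-t/2) := by
      rw [Real.one_rpow, one_mul, one_div, Real.sqrt_eq_rpow, ← Real.rpow_neg hDpos.le,
        ← Real.rpow_mul hDpos.le]
      ring_nf
end

lemma hy_log {D : ℕ} (hD : 0 < D) (w : Fin D → ℂ) (hw : ∑ j, ‖w j‖^2 = 1)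
    (lam : ℂ) (heig : (dft D)ᴴ.mulVec w = lam • w) {t : ℝ} (ht0 : 0 < t) (ht1 : t < 1) :
    ((1-t)/2) * Real.log (∑ j, ‖w j‖ ^ (2/(1-t)))
      ≤ (-t/2) * Real.log D + ((1+t)/2) * Real.log (∑ j, ‖w j‖ ^ (2/(1+t))) := by
  have ht0' : (0:ℝ) < 1 + t := by linarith
  have ht1' : (0:ℝ) < 1 - t := by linarith
  have hDpos : (0:ℝ) < (D:ℝ) := by exact_mod_cast hD
  -- |lam| = 1
  have hlam : ‖lam‖ = 1 := by
    have hp := parseval hD w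
    rw [heig, hw] at hp
    have : ∑ j, ‖(lam • w) j‖^2 = ‖lam‖^2 * ∑ j, ‖w j‖^2 := by
      rw [Finset.mul_sum]
      exact Finset.sum_congr rfl fun j _ => by
        simp [Pi.smul_apply, norm_smul, mul_pow]
    rw [this, hw, mul_one] at hp
    nlinarith [norm_nonneg lam]
  -- some entry is nonzero
  have hex : ∃ j, w j ≠ 0 := by
    by_contra h
    push_neg at h
    simp [h] at hw
  obtain ⟨j₀, hj₀⟩ := hex
  set q : ℝ := 2/(1-t) with hq_def
  set p : ℝ := 2/(1+t) with hp_def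
  have hqpos : 0 < q := by positivity
  have hppos : 0 < p := by positivity
  have hq2 : 2 < q := by
    rw [hq_def, lt_div_iff₀ ht1']; nlinarith
  set Sp : ℝ := ∑ j, ‖w j‖ ^ p with hSp_def
  set Sq : ℝ := ∑ j, ‖w j‖ ^ q with hSq_def
  have hSp_pos : 0 < Sp := by
    apply Finset.sum_pos' (fun j _ => Real.rpow_nonneg (norm_nonneg _) _)
    exact ⟨j₀, Finset.mem_univ _, Real.rpow_pos_of_pos (norm_pos_iff.mpr hj₀) _⟩
  have hSq_pos : 0 < Sq := by
    apply Finset.sum_pos' (fun j _ => Real.rpow_nonneg (norm_nonneg _) _)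
    exact ⟨j₀, Finset.mem_univ _, Real.rpow_pos_of_pos (norm_pos_iff.mpr hj₀) _⟩
  set Np : ℝ := Sp ^ ((1+t)/2) with hNp_def
  have hNp_pos : 0 < Np := Real.rpow_pos_of_pos hSp_pos _
  have hNp_rpow : Np ^ p = Sp := by
    rw [hNp_def, ← Real.rpow_mul hSp_pos.le]
    rw [show (1+t)/2 * p = 1 by rw [hp_def]; field_simp]
    exact Real.rpow_one Sp
  -- normalized vector v
  set v : Fin D → ℂ := fun k => ((Np⁻¹ : ℝ) : ℂ) * w k with hv_def
  have hvnorm : ∀ k, ‖v k‖ = Np⁻¹ * ‖w k‖ := by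
    intro k
    rw [hv_def, norm_mul, Complex.norm_real, Real.norm_eq_abs,
      _root_.abs_of_nonneg (inv_nonneg.mpr hNp_pos.le)]
  have hv : ∑ k, ‖v k‖ ^ (2/(1+t)) = 1 := by
    have : ∀ k, ‖v k‖ ^ p = Np⁻¹ ^ p * ‖w k‖ ^ p := fun k => by
      rw [hvnorm k, Real.mul_rpow (inv_nonneg.mpr hNp_pos.le) (norm_nonneg _)]
    rw [show (2/(1+t)) = p from rfl]
    rw [Finset.sum_congr rfl fun k _ => this k, ← Finset.mul_sum, ← hSp_def,
      Real.inv_rpow hNp_pos.le, hNp_rpow]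
    exact inv_mul_cancel₀ hSp_pos.ne'
  -- u = M v
  set u : Fin D → ℂ := (dft D)ᴴ.mulVec v with hu_def
  have hveq : v = ((Np⁻¹ : ℝ) : ℂ) • w := by funext k; simp [hv_def]
  have hu_eq : ∀ j, u j = ((Np⁻¹ : ℝ) : ℂ) * (lam * w j) := by
    intro j
    rw [hu_def, hveq, Matrix.mulVec_smul, heig]
    simp
  have hunorm : ∀ j, ‖u j‖ = Np⁻¹ * ‖w j‖ := by
    intro j
    rw [hu_eq j, norm_mul, norm_mul, hlam, Complex.norm_real, Real.norm_eq_abs,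
      _root_.abs_of_nonneg (inv_nonneg.mpr hNp_pos.le), one_mul]
  set S : ℝ := ∑ j, ‖u j‖ ^ q with hS_def
  have hS_eq : S = Np⁻¹ ^ q * Sq := by
    rw [hS_def, hSq_def, Finset.mul_sum]
    exact Finset.sum_congr rfl fun j _ => by
      rw [hunorm j, Real.mul_rpow (inv_nonneg.mpr hNp_pos.le) (norm_nonneg _)]
  have hS_pos : 0 < S := by
    rw [hS_eq]
    exact mul_pos (Real.rpow_pos_of_pos (inv_pos.mpr hNp_pos) _) hSq_pos
  -- dual vector x
  set c : ℝ := (S ^ ((1+t)/2))⁻¹ with hc_def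
  have hc_pos : 0 < c := inv_pos.mpr (Real.rpow_pos_of_pos hS_pos _)
  set x : Fin D → ℂ := fun j => (starRingEnd ℂ) (u j) * (((‖u j‖ ^ (q-2)) * c : ℝ) : ℂ)
    with hx_def
  have hpow_collapse : ∀ j, ‖u j‖ * ‖u j‖ ^ (q-2) = ‖u j‖ ^ (q-1) := by
    intro j
    rcases eq_or_ne (u j) 0 with h | h
    · rw [h, norm_zero, Real.zero_rpow (by linarith), Real.zero_rpow (by linarith), mul_zero]
    · have hpos : 0 < ‖u j‖ := norm_pos_iff.mpr h
      rw [show q - 1 = 1 + (q-2) by ring, Real.rpow_add hpos, Real.rpow_one]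
  have hxnorm : ∀ j, ‖x j‖ = ‖u j‖ ^ (q-1) * c := by
    intro j
    simp only [hx_def]
    rw [norm_mul, RCLike.norm_conj, Complex.norm_real, Real.norm_eq_abs,
      _root_.abs_of_nonneg (mul_nonneg (Real.rpow_nonneg (norm_nonneg _) _) hc_pos.le),
      ← mul_assoc, hpow_collapse j]
  have hx : ∑ j, ‖x j‖ ^ (2/(1+t)) = 1 := by
    have hterm : ∀ j, ‖x j‖ ^ p = ‖u j‖ ^ q * (c ^ p) := by
      intro j
      rw [hxnorm j, Real.mul_rpow (Real.rpow_nonneg (norm_nonneg _) _) hc_pos.le,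
        ← Real.rpow_mul (norm_nonneg _),
        show (q-1)*p = q by rw [hq_def, hp_def]; field_simp; ring]
    rw [show (2/(1+t)) = p from rfl]
    rw [Finset.sum_congr rfl fun j _ => hterm j, ← Finset.sum_mul, ← hS_def]
    rw [hc_def, ← Real.rpow_neg_one (S ^ ((1+t)/2)), ← Real.rpow_mul hS_pos.le,
      ← Real.rpow_mul hS_pos.le]
    rw [show (1+t)/2 * -1 * p = -1 by rw [hp_def]; field_simp]
    rw [Real.rpow_neg_one]
    exact mul_inv_cancel₀ hS_pos.ne'
  -- the pairing value
  have hsum : ∑ j, x j * u j = ((S ^ ((1-t)/2) : ℝ) : ℂ) := by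
    have hterm : ∀ j, x j * u j = ((‖u j‖ ^ q * c : ℝ) : ℂ) := by
      intro j
      simp only [hx_def]
      have : (starRingEnd ℂ) (u j) * (((‖u j‖ ^ (q-2)) * c : ℝ) : ℂ) * u j
          = ((starRingEnd ℂ) (u j) * u j) * (((‖u j‖ ^ (q-2)) * c : ℝ) : ℂ) := by ring
      rw [this]
      rw [show (starRingEnd ℂ) (u j) * u j = ((‖u j‖^2 : ℝ) : ℂ) by
        rw [mul_comm, Complex.mul_conj, Complex.normSq_eq_norm_sq]]
      rw [← Complex.ofReal_mul]
      congr 1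
      rcases eq_or_ne (u j) 0 with h | h
      · rw [h, norm_zero]
        rw [Real.zero_rpow (by linarith), Real.zero_rpow (by positivity)]
        ring
      · have hpos : 0 < ‖u j‖ := norm_pos_iff.mpr h
        rw [← Real.rpow_natCast ‖u j‖ 2, ← mul_assoc, ← Real.rpow_add hpos]
        norm_num
    rw [Finset.sum_congr rfl fun j _ => hterm j, ← Complex.ofReal_sum]
    congr 1
    rw [← Finset.sum_mul, ← hS_def]
    rw [hc_def, ← Real.rpow_neg_one (S ^ ((1+t)/2)), ← Real.rpow_mul hS_pos.le,
      show ((1:ℝ)-t)/2 = 1 + (1+t)/2 * (-1) by ring, Real.rpow_add hS_pos, Real.rpow_one]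
  -- apply RT
  have hRT := RT_bilinear hD ht0 ht1 v x hv hx
  rw [← hu_def] at hRT
  rw [hsum] at hRT
  rw [Complex.norm_real, Real.norm_eq_abs,
    _root_.abs_of_nonneg (Real.rpow_nonneg hS_pos.le _)] at hRT
  -- unfold S
  have hfinal : Sq ^ ((1-t)/2) ≤ (D:ℝ) ^ (-t/2) * Np := by
    have h1 : S ^ ((1-t)/2) = Np⁻¹ * Sq ^ ((1-t)/2) := by
      rw [hS_eq, Real.mul_rpow (Real.rpow_nonneg (inv_nonneg.mpr hNp_pos.le) _) hSq_pos.le,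
        ← Real.rpow_mul (inv_nonneg.mpr hNp_pos.le)]
      rw [show q * ((1-t)/2) = 1 by rw [hq_def]; field_simp]
      rw [Real.rpow_one]
    rw [h1] at hRT
    calc Sq ^ ((1-t)/2) = Np * (Np⁻¹ * Sq ^ ((1-t)/2)) := by
          rw [← mul_assoc, mul_inv_cancel₀ hNp_pos.ne', one_mul]
      _ ≤ Np * ((D:ℝ) ^ (-t/2)) := by
          apply mul_le_mul_of_nonneg_left hRT hNp_pos.le
      _ = (D:ℝ) ^ (-t/2) * Np := by ring
  -- take logs
  have hlog := Real.log_le_log (Real.rpow_pos_of_pos hSq_pos _) hfinal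
  rw [Real.log_rpow hSq_pos, Real.log_mul (by positivity) hNp_pos.ne',
    Real.log_rpow hDpos, hNp_def, Real.log_rpow hSp_pos] at hlog
  exact hlog

lemma hasDerivAt_rpow_base (c : ℝ) (hc : 0 ≤ c) :
    HasDerivAt (fun s : ℝ => c ^ s) (c * Real.log c) 1 := by
  rcases eq_or_lt_of_le hc with h | h
  · rw [← h]
    have hev : (fun _ : ℝ => (0:ℝ)) =ᶠ[nhds (1:ℝ)] (fun s : ℝ => (0:ℝ) ^ s) := by
      filter_upwards [eventually_ne_nhds (one_ne_zero : (1:ℝ) ≠ 0)] with s hs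
      exact (Real.zero_rpow hs).symm
    have := (hasDerivAt_const (1:ℝ) (0:ℝ)).congr_of_eventuallyEq hev.symm
    simpa using this
  · have heq : (fun s : ℝ => c ^ s) = fun s => Real.exp (Real.log c * s) :=
      funext fun s => Real.rpow_def_of_pos h s
    rw [heq]
    have h1 : HasDerivAt (fun s : ℝ => Real.log c * s) (Real.log c) 1 := by
      simpa using (hasDerivAt_id (1:ℝ)).const_mul (Real.log c)
    have := h1.exp
    rw [mul_one, Real.exp_log h] at this
    simpa [mul_comm] using this

/-- Any normalized eigenvector `w ∈ ℂ^D` of the inverse discrete Fourier transform `F_D^*`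
has Shannon entropy `h(w) = -∑ |w_ε|² log |w_ε|²` at least `(log D)/2`. -/
theorem dft_eigenvector_entropy {D : ℕ} (w : Fin D → ℂ)
    (hw : ∑ j, ‖w j‖ ^ 2 = 1) (lam : ℂ)
    (heig : (dft D)ᴴ.mulVec w = lam • w) :
    Real.log D / 2 ≤ -∑ j, ‖w j‖ ^ 2 * Real.log (‖w j‖ ^ 2) := by
  have hD : 0 < D := by
    rcases Nat.eq_zero_or_pos D with h | h
    · subst h; simp at hw
    · exact h
  set pj : Fin D → ℝ := fun j => ‖w j‖^2 with hpj_def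
  set ψ : ℝ → ℝ := fun s => ∑ j, pj j ^ s with hψ_def
  set L : ℝ := ∑ j, pj j * Real.log (pj j) with hL_def
  have hψ1 : ψ 1 = 1 := by
    simp only [hψ_def, Real.rpow_one]
    exact hw
  have hψd : HasDerivAt ψ L 1 := by
    rw [hψ_def, hL_def]
    exact HasDerivAt.fun_sum fun j _ => hasDerivAt_rpow_base (pj j) (by positivity)
  -- sums of powers of ‖w j‖ in terms of ψ
  have hpow : ∀ s : ℝ, ∑ j, ‖w j‖ ^ (2*s) = ψ s := by
    intro s
    refine Finset.sum_congr rfl fun j _ => ?_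
    simp only [hpj_def]
    rw [← Real.rpow_natCast ‖w j‖ 2, ← Real.rpow_mul (norm_nonneg _)]
    norm_num
  set G : ℝ → ℝ := fun s => s/2 * Real.log D + (1-s)/2 * Real.log (ψ (1/(1-s)))
    - (1+s)/2 * Real.log (ψ (1/(1+s))) with hG_def
  have hG0 : G 0 = 0 := by
    simp [hG_def, hψ1]
  have hGle : ∀ s ∈ Set.Ioo (0:ℝ) 1, G s ≤ 0 := by
    intro s hs
    have h := hy_log hD w hw lam heig hs.1 hs.2
    have e1 : ∑ j, ‖w j‖ ^ (2/(1-s)) = ψ (1/(1-s)) := by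
      rw [← hpow (1/(1-s))]
      refine Finset.sum_congr rfl fun j _ => ?_
      congr 1
      ring
    have e2 : ∑ j, ‖w j‖ ^ (2/(1+s)) = ψ (1/(1+s)) := by
      rw [← hpow (1/(1+s))]
      refine Finset.sum_congr rfl fun j _ => ?_
      congr 1
      ring
    rw [e1, e2] at h
    rw [hG_def]
    dsimp only
    linarith
  have hG' : HasDerivAt G (Real.log D / 2 + L) 0 := by
    have h1 : HasDerivAt (fun s : ℝ => 1/(1-s)) 1 0 := by
      have hf : HasDerivAt (fun s : ℝ => 1-s) (-1) 0 := (hasDerivAt_id (0:ℝ)).const_sub 1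
      have := hf.fun_inv (by norm_num)
      simpa [one_div] using this
    have h2 : HasDerivAt (fun s : ℝ => 1/(1+s)) (-1) 0 := by
      have hf : HasDerivAt (fun s : ℝ => 1+s) 1 0 := by
        simpa using (hasDerivAt_id (0:ℝ)).const_add 1
      have := hf.fun_inv (by norm_num)
      simpa [one_div] using this
    have hψ10 : (1:ℝ)/(1-0) = 1 := by norm_num
    have hψ20 : (1:ℝ)/(1+0) = 1 := by norm_num
    have hc1 : HasDerivAt (fun s : ℝ => ψ (1/(1-s))) (L*1) 0 := by
      have h := HasDerivAt.comp 0 (show HasDerivAt ψ L ((fun s:ℝ => 1/(1-s)) 0) by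
        norm_num; exact hψd) h1
      simpa [Function.comp_def] using h
    have hc2 : HasDerivAt (fun s : ℝ => ψ (1/(1+s))) (L*(-1)) 0 := by
      have h := HasDerivAt.comp 0 (show HasDerivAt ψ L ((fun s:ℝ => 1/(1+s)) 0) by
        norm_num; exact hψd) h2
      simpa [Function.comp_def] using h
    have hψne : ψ (1/(1-(0:ℝ))) ≠ 0 := by rw [hψ10, hψ1]; norm_num
    have hψne2 : ψ (1/(1+(0:ℝ))) ≠ 0 := by rw [hψ20, hψ1]; norm_num
    have hl1 : HasDerivAt (fun s : ℝ => Real.log (ψ (1/(1-s)))) ((ψ (1/(1-(0:ℝ))))⁻¹ * (L*1)) 0 :=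
      HasDerivAt.comp 0 (Real.hasDerivAt_log hψne) hc1
    have hl2 : HasDerivAt (fun s : ℝ => Real.log (ψ (1/(1+s)))) ((ψ (1/(1+(0:ℝ))))⁻¹ * (L*(-1))) 0 :=
      HasDerivAt.comp 0 (Real.hasDerivAt_log hψne2) hc2
    have hu1 : HasDerivAt (fun s : ℝ => (1-s)/2) (-(1:ℝ)/2) 0 :=
      ((hasDerivAt_id (0:ℝ)).const_sub 1).div_const 2
    have hu2 : HasDerivAt (fun s : ℝ => (1+s)/2) ((1:ℝ)/2) 0 := by
      have hf : HasDerivAt (fun s : ℝ => 1+s) 1 0 := by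
        simpa using (hasDerivAt_id (0:ℝ)).const_add 1
      exact hf.div_const 2
    have hA : HasDerivAt (fun s : ℝ => s/2 * Real.log D) (Real.log D / 2) 0 := by
      have h := (hasDerivAt_id (0:ℝ)).mul_const (Real.log D / 2)
      have heq : (fun s : ℝ => s/2 * Real.log D) = (fun s : ℝ => s * (Real.log D / 2)) := by
        funext s; ring
      rw [heq]
      simpa using h
    have hB := hu1.mul hl1
    have hC := hu2.mul hl2
    have := (hA.add hB).sub hC
    refine this.congr_deriv ?_
    rw [hψ10, hψ20, hψ1]
    simp
    ring
  -- slope argument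
  have hslope := hasDerivAt_iff_tendsto_slope.mp hG'
  have hmono : nhdsWithin (0:ℝ) (Set.Ioi 0) ≤ nhdsWithin 0 {(0:ℝ)}ᶜ :=
    nhdsWithin_mono 0 (fun x hx => by simpa using ne_of_gt hx)
  have hev : ∀ᶠ t in nhdsWithin (0:ℝ) (Set.Ioi 0), slope G 0 t ≤ 0 := by
    filter_upwards [Ioo_mem_nhdsGT_of_mem (by norm_num : (0:ℝ) ∈ Set.Ico (0:ℝ) 1)] with t ht
    rw [slope_def_field]
    rw [hG0]
    have := hGle t ht
    have h0 : G t / (t - 0) ≤ 0 :=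
      div_nonpos_of_nonpos_of_nonneg (by linarith) (by linarith [ht.1])
    simpa using h0
  have hle : Real.log D / 2 + L ≤ 0 :=
    le_of_tendsto (hslope.mono_left hmono) hev
  have : -∑ j, ‖w j‖ ^ 2 * Real.log (‖w j‖ ^ 2) = -L := by rw [hL_def]
  rw [this]
  linarith
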